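/- Let M be the subalgebra of UT_8(F) described below, closed under the reflection involution θ_8. The center of M is Z(M) = F·e_{18}, and [x_1^+,x_2^+][x_3^+,x_4^+][x_5^+,x_6^+][x_7^+,x_8^+] is a proper central *-polynomial for (M, θ_8): every such product of four commutators of θ_8-symmetric elements lies in F·e_{18}, and the evaluation at the symmetric elements e_{12}+e_{78}, e_{22}+e_{77}, e_{22}+e_{77}, e_{23}+e_{67}, e_{33}+e_{66}, e_{34}+e_{56}, e_{44}+e_{55}, e_{48}+e_{14} equals e_{18} ≠ 0. -/

import Mathlib

open Matrix

/-- The reflection involution `θ_8` on `M_8(F)`. -/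
def reflInv {F : Type*} [Field F] (A : Matrix (Fin 8) (Fin 8) F) :
    Matrix (Fin 8) (Fin 8) F :=
  Matrix.of fun i j => A j.rev i.rev

/-- Membership in the algebra `M ⊆ UT_8(F)`: upper triangular with
`X₁₁ = X₈₈ = 0`, `X₂₂ = X₇₇`, `X₃₃ = X₆₆`, `X₄₄ = X₅₅` (1-indexed), and zero
entries in positions `(i,j)` for `i ∈ {2,3,4}`, `j ∈ {5,6,7}`. -/
def memM {F : Type*} [Field F] (X : Matrix (Fin 8) (Fin 8) F) : Prop :=
  (∀ i j : Fin 8, j < i → X i j = 0) ∧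
  X 0 0 = 0 ∧ X 7 7 = 0 ∧ X 1 1 = X 6 6 ∧ X 2 2 = X 5 5 ∧ X 3 3 = X 4 4 ∧
  X 1 4 = 0 ∧ X 1 5 = 0 ∧ X 1 6 = 0 ∧
  X 2 4 = 0 ∧ X 2 5 = 0 ∧ X 2 6 = 0 ∧
  X 3 4 = 0 ∧ X 3 5 = 0 ∧ X 3 6 = 0

/-- The matrix unit `e_{ij}` in `M_8(F)` (1-indexed positions shifted to `Fin 8`). -/
def e {F : Type*} [Field F] (i j : Fin 8) : Matrix (Fin 8) (Fin 8) F :=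
  Matrix.single i j 1

/-- Positions at which elements of `M` may be nonzero. -/
def allowedM (i j : Fin 8) : Bool :=
  (i.val < j.val && !(1 ≤ i.val && i.val ≤ 3 && 4 ≤ j.val && j.val ≤ 6)) ||
  (i.val == j.val && 1 ≤ i.val && i.val ≤ 6)

/-- Positions at which zero-diagonal elements of `M` may be nonzero. -/
def allowedN (i j : Fin 8) : Bool := allowedM i j && !(i == j)

/-- Positions at which a product of two zero-diagonal elements of `M` may be nonzero. -/
def allowed2 (i j : Fin 8) : Bool :=
  decide ((i.val, j.val) ∈ [(0,2),(0,3),(0,5),(0,6),(0,7),(1,3),(1,7),(2,7),(4,6),(4,7),(5,7)])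

lemma e_apply {F : Type*} [Field F] (i j a b : Fin 8) :
    (e i j : Matrix (Fin 8) (Fin 8) F) a b = if i = a ∧ j = b then 1 else 0 := rfl

lemma zM {F : Type*} [Field F] {X : Matrix (Fin 8) (Fin 8) F} (hX : memM X) :
    ∀ i j : Fin 8, allowedM i j = false → X i j = 0 := by
  obtain ⟨ht, h00, h77, h16, h25, h34, z14, z15, z16, z24, z25, z26, z34, z35, z36⟩ := hX
  intro i j hij
  fin_cases i <;> fin_cases j <;>
    first
      | exact absurd hij (by decide)
      | assumption
      | exact ht _ _ (by decide)

lemma zComm {F : Type*} [Field F] {A B : Matrix (Fin 8) (Fin 8) F}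
    (hA : ∀ i j : Fin 8, allowedM i j = false → A i j = 0)
    (hB : ∀ i j : Fin 8, allowedM i j = false → B i j = 0) :
    ∀ i j : Fin 8, allowedN i j = false → (A * B - B * A) i j = 0 := by
  intro i j hij
  fin_cases i <;> fin_cases j <;>
    first
      | exact absurd hij (by decide)
      | (simp (config := { decide := true }) only [Matrix.sub_apply, Matrix.mul_apply,
          Fin.sum_univ_eight, hA, hB, mul_zero, zero_mul, add_zero, zero_add, sub_self,
          sub_zero, zero_sub, neg_eq_zero]
         try exact sub_eq_zero.mpr (mul_comm _ _))

lemma zProd2 {F : Type*} [Field F] {S T : Matrix (Fin 8) (Fin 8) F}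
    (hS : ∀ i j : Fin 8, allowedN i j = false → S i j = 0)
    (hT : ∀ i j : Fin 8, allowedN i j = false → T i j = 0) :
    ∀ i j : Fin 8, allowed2 i j = false → (S * T) i j = 0 := by
  intro i j hij
  fin_cases i <;> fin_cases j <;>
    first
      | exact absurd hij (by decide)
      | simp (config := { decide := true }) only [Matrix.mul_apply,
          Fin.sum_univ_eight, hS, hT, mul_zero, zero_mul, add_zero, zero_add]

lemma zProd4 {F : Type*} [Field F] {P Q : Matrix (Fin 8) (Fin 8) F}
    (hP : ∀ i j : Fin 8, allowed2 i j = false → P i j = 0)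
    (hQ : ∀ i j : Fin 8, allowed2 i j = false → Q i j = 0) :
    P * Q = ((P * Q) 0 7) • (e 0 7 : Matrix (Fin 8) (Fin 8) F) := by
  ext i j
  fin_cases i <;> fin_cases j <;>
    simp (config := { decide := true }) only [e, Matrix.smul_apply, Matrix.single,
      Matrix.of_apply, Matrix.mul_apply, Fin.sum_univ_eight, hP, hQ, mul_zero, zero_mul,
      add_zero, zero_add, smul_zero, if_true, if_false, and_self, smul_eq_mul, mul_one] <;>
    try rfl

lemma memM_e {F : Type*} [Field F] (i j : Fin 8) (hij : i < j) (h : allowedM i j = true) :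
    memM (e i j : Matrix (Fin 8) (Fin 8) F) := by
  have key : ∀ a b : Fin 8, (allowedM a b = false ∨ a = b) → (e i j : Matrix (Fin 8) (Fin 8) F) a b = 0 := by
    intro a b hab
    rw [e_apply, if_neg]
    rintro ⟨rfl, rfl⟩
    rcases hab with hab | hab
    · rw [hab] at h; cases h
    · exact absurd hij (hab ▸ lt_irrefl _)
  refine ⟨fun a b hab => ?_, key 0 0 (.inr rfl), key 7 7 (.inr rfl),
    by rw [key 1 1 (.inr rfl), key 6 6 (.inr rfl)],
    by rw [key 2 2 (.inr rfl), key 5 5 (.inr rfl)],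
    by rw [key 3 3 (.inr rfl), key 4 4 (.inr rfl)],
    key 1 4 (.inl (by decide)), key 1 5 (.inl (by decide)), key 1 6 (.inl (by decide)),
    key 2 4 (.inl (by decide)), key 2 5 (.inl (by decide)), key 2 6 (.inl (by decide)),
    key 3 4 (.inl (by decide)), key 3 5 (.inl (by decide)), key 3 6 (.inl (by decide))⟩
  rw [e_apply, if_neg]
  rintro ⟨rfl, rfl⟩
  exact absurd hij (not_lt.mpr hab.le)

/-- `Z(M) = F·e_{18}` and `[x₁⁺,x₂⁺][x₃⁺,x₄⁺][x₅⁺,x₆⁺][x₇⁺,x₈⁺]` is a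
proper central `*`-polynomial for `(M, θ_8)`, with the given explicit evaluation
equal to `e_{18} ≠ 0`. -/
theorem stmt_14 (F : Type*) [Field F] [CharZero F] :
    (∀ X : Matrix (Fin 8) (Fin 8) F, memM X → memM (reflInv X)) ∧
    (∀ X : Matrix (Fin 8) (Fin 8) F, memM X →
      ((∀ Y : Matrix (Fin 8) (Fin 8) F, memM Y → X * Y = Y * X) ↔
        ∃ c : F, X = c • (e 0 7))) ∧
    (∀ A₁ A₂ A₃ A₄ A₅ A₆ A₇ A₈ : Matrix (Fin 8) (Fin 8) F,
      memM A₁ → memM A₂ → memM A₃ → memM A₄ → memM A₅ → memM A₆ → memM A₇ → memM A₈ →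
      reflInv A₁ = A₁ → reflInv A₂ = A₂ → reflInv A₃ = A₃ → reflInv A₄ = A₄ →
      reflInv A₅ = A₅ → reflInv A₆ = A₆ → reflInv A₇ = A₇ → reflInv A₈ = A₈ →
      ∃ c : F, (A₁ * A₂ - A₂ * A₁) * (A₃ * A₄ - A₄ * A₃) *
        (A₅ * A₆ - A₆ * A₅) * (A₇ * A₈ - A₈ * A₇) = c • (e 0 7)) ∧
    (((e 0 1 + e 6 7) * (e 1 1 + e 6 6) - (e 1 1 + e 6 6) * (e 0 1 + e 6 7)) *
      ((e 1 1 + e 6 6) * (e 1 2 + e 5 6) - (e 1 2 + e 5 6) * (e 1 1 + e 6 6)) *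
      ((e 2 2 + e 5 5) * (e 2 3 + e 4 5) - (e 2 3 + e 4 5) * (e 2 2 + e 5 5)) *
      ((e 3 3 + e 4 4) * (e 3 7 + e 0 3) - (e 3 7 + e 0 3) * (e 3 3 + e 4 4)) =
        (e 0 7 : Matrix (Fin 8) (Fin 8) F)) ∧
    (e 0 7 : Matrix (Fin 8) (Fin 8) F) ≠ 0 := by
  refine ⟨?_, ?_, ?_, ?_, ?_⟩
  · -- closure under θ₈
    rintro X ⟨ht, h00, h77, h16, h25, h34, z14, z15, z16, z24, z25, z26, z34, z35, z36⟩
    refine ⟨fun i j hij => ht _ _ (Fin.rev_lt_rev.mpr hij),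
      ?_, ?_, ?_, ?_, ?_, ?_, ?_, ?_, ?_, ?_, ?_, ?_, ?_, ?_⟩ <;>
      simp only [reflInv, Matrix.of_apply,
        show (Fin.rev 0 : Fin 8) = 7 from by decide, show (Fin.rev 1 : Fin 8) = 6 from by decide,
        show (Fin.rev 2 : Fin 8) = 5 from by decide, show (Fin.rev 3 : Fin 8) = 4 from by decide,
        show (Fin.rev 4 : Fin 8) = 3 from by decide, show (Fin.rev 5 : Fin 8) = 2 from by decide,
        show (Fin.rev 6 : Fin 8) = 1 from by decide, show (Fin.rev 7 : Fin 8) = 0 from by decide] <;>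
      first
        | assumption
        | exact h16.symm
        | exact h25.symm
        | exact h34.symm
  · -- the center is F·e₁₈
    intro X hX
    constructor
    · intro hc
      obtain ⟨ht, h00, h77, h16, h25, h34, z14, z15, z16, z24, z25, z26, z34, z35, z36⟩ := hX
      have get : ∀ p q a b : Fin 8, p < q → allowedM p q = true →
          ((X * e p q : Matrix (Fin 8) (Fin 8) F)) a b = ((e p q * X : Matrix (Fin 8) (Fin 8) F)) a b := fun p q a b h1 h2 =>
        congrFun (congrFun (hc (e p q) (memM_e p q h1 h2)) a) b
      have E : ∀ p q a b : Fin 8, p < q → allowedM p q = true →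
          (∑ k : Fin 8, X a k * (e p q : Matrix (Fin 8) (Fin 8) F) k b)
            = ∑ k : Fin 8, (e p q : Matrix (Fin 8) (Fin 8) F) a k * X k b := by
        intro p q a b h1 h2
        have := get p q a b h1 h2
        simpa [Matrix.mul_apply] using this
      -- kill entries using specific test matrices
      have e11 : X 1 1 = 0 := by
        have h := E 0 1 0 1 (by decide) (by decide)
        simp (config := { decide := true }) only [Fin.sum_univ_eight, e_apply, if_true,
          if_false, and_self, mul_one, mul_zero, one_mul, zero_mul, add_zero, zero_add, h00] at h
        exact h.symm
      have e12 : X 1 2 = 0 := by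
        have h := E 0 1 0 2 (by decide) (by decide)
        simp (config := { decide := true }) only [Fin.sum_univ_eight, e_apply, if_true,
          if_false, and_self, mul_one, mul_zero, one_mul, zero_mul, add_zero, zero_add] at h
        exact h.symm
      have e13 : X 1 3 = 0 := by
        have h := E 0 1 0 3 (by decide) (by decide)
        simp (config := { decide := true }) only [Fin.sum_univ_eight, e_apply, if_true,
          if_false, and_self, mul_one, mul_zero, one_mul, zero_mul, add_zero, zero_add] at h
        exact h.symm
      have e17 : X 1 7 = 0 := by
        have h := E 0 1 0 7 (by decide) (by decide)
        simp (config := { decide := true }) only [Fin.sum_univ_eight, e_apply, if_true,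
          if_false, and_self, mul_one, mul_zero, one_mul, zero_mul, add_zero, zero_add] at h
        exact h.symm
      have e01 : X 0 1 = 0 := by
        have h := E 1 2 0 2 (by decide) (by decide)
        simp (config := { decide := true }) only [Fin.sum_univ_eight, e_apply, if_true,
          if_false, and_self, mul_one, mul_zero, one_mul, zero_mul, add_zero, zero_add] at h
        exact h
      have e22 : X 2 2 = 0 := by
        have h := E 1 2 1 2 (by decide) (by decide)
        simp (config := { decide := true }) only [Fin.sum_univ_eight, e_apply, if_true,
          if_false, and_self, mul_one, mul_zero, one_mul, zero_mul, add_zero, zero_add, e11] at h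
        exact h.symm
      have e23 : X 2 3 = 0 := by
        have h := E 1 2 1 3 (by decide) (by decide)
        simp (config := { decide := true }) only [Fin.sum_univ_eight, e_apply, if_true,
          if_false, and_self, mul_one, mul_zero, one_mul, zero_mul, add_zero, zero_add] at h
        exact h.symm
      have e27 : X 2 7 = 0 := by
        have h := E 1 2 1 7 (by decide) (by decide)
        simp (config := { decide := true }) only [Fin.sum_univ_eight, e_apply, if_true,
          if_false, and_self, mul_one, mul_zero, one_mul, zero_mul, add_zero, zero_add] at h
        exact h.symm
      have e02 : X 0 2 = 0 := by
        have h := E 2 3 0 3 (by decide) (by decide)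
        simp (config := { decide := true }) only [Fin.sum_univ_eight, e_apply, if_true,
          if_false, and_self, mul_one, mul_zero, one_mul, zero_mul, add_zero, zero_add] at h
        exact h
      have e33 : X 3 3 = 0 := by
        have h := E 2 3 2 3 (by decide) (by decide)
        simp (config := { decide := true }) only [Fin.sum_univ_eight, e_apply, if_true,
          if_false, and_self, mul_one, mul_zero, one_mul, zero_mul, add_zero, zero_add, e22] at h
        exact h.symm
      have e37 : X 3 7 = 0 := by
        have h := E 2 3 2 7 (by decide) (by decide)
        simp (config := { decide := true }) only [Fin.sum_univ_eight, e_apply, if_true,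
          if_false, and_self, mul_one, mul_zero, one_mul, zero_mul, add_zero, zero_add] at h
        exact h.symm
      have e04 : X 0 4 = 0 := by
        have h := E 4 5 0 5 (by decide) (by decide)
        simp (config := { decide := true }) only [Fin.sum_univ_eight, e_apply, if_true,
          if_false, and_self, mul_one, mul_zero, one_mul, zero_mul, add_zero, zero_add] at h
        exact h
      have e56 : X 5 6 = 0 := by
        have h := E 4 5 4 6 (by decide) (by decide)
        simp (config := { decide := true }) only [Fin.sum_univ_eight, e_apply, if_true,
          if_false, and_self, mul_one, mul_zero, one_mul, zero_mul, add_zero, zero_add] at h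
        exact h.symm
      have e57 : X 5 7 = 0 := by
        have h := E 4 5 4 7 (by decide) (by decide)
        simp (config := { decide := true }) only [Fin.sum_univ_eight, e_apply, if_true,
          if_false, and_self, mul_one, mul_zero, one_mul, zero_mul, add_zero, zero_add] at h
        exact h.symm
      have e05 : X 0 5 = 0 := by
        have h := E 5 6 0 6 (by decide) (by decide)
        simp (config := { decide := true }) only [Fin.sum_univ_eight, e_apply, if_true,
          if_false, and_self, mul_one, mul_zero, one_mul, zero_mul, add_zero, zero_add] at h
        exact h
      have e67 : X 6 7 = 0 := by
        have h := E 5 6 5 7 (by decide) (by decide)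
        simp (config := { decide := true }) only [Fin.sum_univ_eight, e_apply, if_true,
          if_false, and_self, mul_one, mul_zero, one_mul, zero_mul, add_zero, zero_add] at h
        exact h.symm
      have e06 : X 0 6 = 0 := by
        have h := E 6 7 0 7 (by decide) (by decide)
        simp (config := { decide := true }) only [Fin.sum_univ_eight, e_apply, if_true,
          if_false, and_self, mul_one, mul_zero, one_mul, zero_mul, add_zero, zero_add, e17] at h
        exact h
      have e46 : X 4 6 = 0 := by
        have h := E 6 7 4 7 (by decide) (by decide)
        simp (config := { decide := true }) only [Fin.sum_univ_eight, e_apply, if_true,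
          if_false, and_self, mul_one, mul_zero, one_mul, zero_mul, add_zero, zero_add] at h
        exact h
      have e45 : X 4 5 = 0 := by
        have h := E 0 4 0 5 (by decide) (by decide)
        simp (config := { decide := true }) only [Fin.sum_univ_eight, e_apply, if_true,
          if_false, and_self, mul_one, mul_zero, one_mul, zero_mul, add_zero, zero_add] at h
        exact h.symm
      have e47 : X 4 7 = 0 := by
        have h := E 0 4 0 7 (by decide) (by decide)
        simp (config := { decide := true }) only [Fin.sum_univ_eight, e_apply, if_true,
          if_false, and_self, mul_one, mul_zero, one_mul, zero_mul, add_zero, zero_add] at h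
        exact h.symm
      have e03 : X 0 3 = 0 := by
        have h := E 3 7 0 7 (by decide) (by decide)
        simp (config := { decide := true }) only [Fin.sum_univ_eight, e_apply, if_true,
          if_false, and_self, mul_one, mul_zero, one_mul, zero_mul, add_zero, zero_add, e37] at h
        exact h
      have e66 : X 6 6 = 0 := h16.symm.trans e11
      have e55 : X 5 5 = 0 := h25.symm.trans e22
      have e44 : X 4 4 = 0 := h34.symm.trans e33
      refine ⟨X 0 7, ?_⟩
      ext a b
      fin_cases a <;> fin_cases b <;>
        simp (config := { decide := true }) only [Matrix.smul_apply, e_apply, smul_eq_mul,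
          mul_one, mul_zero, if_true, if_false, and_self, smul_zero] <;>
        first
          | rfl
          | assumption
          | exact ht _ _ (by decide)
    · rintro ⟨c, rfl⟩ Y hY
      have h7 : ∀ b : Fin 8, Y 7 b = 0 := fun b => zM hY 7 b (by revert b; decide)
      have h0 : ∀ a : Fin 8, Y a 0 = 0 := fun a => zM hY a 0 (by revert a; decide)
      have l : (e 0 7 : Matrix (Fin 8) (Fin 8) F) * Y = 0 := by
        ext a b
        simp (config := { decide := true }) only [Matrix.mul_apply, Fin.sum_univ_eight,
          e_apply, h7, ite_mul, one_mul, zero_mul, mul_zero, add_zero, zero_add,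
          Matrix.zero_apply, if_true, if_false, and_true, and_false, ite_self]
      have r : Y * (e 0 7 : Matrix (Fin 8) (Fin 8) F) = 0 := by
        ext a b
        simp (config := { decide := true }) only [Matrix.mul_apply, Fin.sum_univ_eight,
          e_apply, h0, mul_ite, mul_one, mul_zero, zero_mul, add_zero, zero_add,
          Matrix.zero_apply, if_true, if_false, true_and, false_and, ite_self]
      rw [Matrix.smul_mul, Matrix.mul_smul, l, r]
  · -- central *-polynomial
    intro A₁ A₂ A₃ A₄ A₅ A₆ A₇ A₈ h1 h2 h3 h4 h5 h6 h7 h8 _ _ _ _ _ _ _ _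
    have key := zProd4 (zProd2 (zComm (zM h1) (zM h2)) (zComm (zM h3) (zM h4)))
      (zProd2 (zComm (zM h5) (zM h6)) (zComm (zM h7) (zM h8)))
    exact ⟨_, by rw [mul_assoc, key]⟩
  · -- explicit evaluation
    simp (config := { decide := true }) [e, mul_sub, sub_mul, mul_add, add_mul,
      Matrix.single_mul_single_same, Matrix.single_mul_single_of_ne]
  · -- e₁₈ ≠ 0
    intro h
    exact one_ne_zero (α := F) (by simpa [e_apply] using congrFun (congrFun h 0) 7)
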